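/- Let η > 0 and γ ≥ 0, and let x_z : ℝ → ℝ be differentiable with |x_z'(t)| ≤ γ for all t. Let x_u : [t₀, ∞) → ℝ be differentiable, satisfy x_u'(t) = η(x_u(t) − x_z(t)) for all t ≥ t₀, and satisfy the stability condition x_u(t₀) = η ∫_{t₀}^∞ e^{−η(τ−t₀)} x_z(τ) dτ. Then |x_u(t) − x_z(t)| ≤ γ/η for all t ≥ t₀. -/

import Mathlib

open MeasureTheory Real

open Set Filter

lemma tend_exp {η : ℝ} (hη : 0 < η) (t : ℝ) :
    Tendsto (fun τ : ℝ => exp (-η * (τ - t))) atTop (nhds 0) := by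
  apply Real.tendsto_exp_atBot.comp
  exact (tendsto_atTop_add_const_right _ _ tendsto_id).const_mul_atTop_of_neg (neg_lt_zero.mpr hη)

lemma tend_lin {η : ℝ} (hη : 0 < η) (t : ℝ) :
    Tendsto (fun τ : ℝ => (τ - t) * exp (-η * (τ - t))) atTop (nhds 0) := by
  have hmap : Tendsto (fun τ : ℝ => η * (τ - t)) atTop atTop := by
    exact (tendsto_atTop_add_const_right _ _ tendsto_id).const_mul_atTop hη
  have h := (Real.tendsto_pow_mul_exp_neg_atTop_nhds_zero 1).comp hmap
  have h2 := h.const_mul (1/η)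
  rw [mul_zero] at h2
  refine h2.congr fun τ => ?_
  simp only [Function.comp, pow_one]
  field_simp

lemma hd_exp {η : ℝ} (t τ : ℝ) :
    HasDerivAt (fun τ : ℝ => exp (-η * (τ - t))) (-η * exp (-η * (τ - t))) τ := by
  have h : HasDerivAt (fun τ : ℝ => -η * (τ - t)) (-η) τ := by
    simpa using ((hasDerivAt_id τ).sub_const t).const_mul (-η)
  simpa [mul_comm] using h.exp

lemma hd_F {η : ℝ} (hη : 0 < η) (t τ : ℝ) :
    HasDerivAt (fun τ : ℝ => -(1/η) * exp (-η * (τ - t))) (exp (-η * (τ - t))) τ := by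
  have h := (hd_exp (η := η) t τ).const_mul (-(1/η))
  refine h.congr_deriv ?_
  field_simp

lemma int_exp {η : ℝ} (hη : 0 < η) (t : ℝ) :
    IntegrableOn (fun τ : ℝ => exp (-η * (τ - t))) (Ioi t) := by
  apply integrableOn_Ioi_deriv_of_nonneg' (fun x _ => hd_F hη t x)
    (fun x _ => (exp_pos _).le)
  have := (tend_exp hη t).const_mul (-(1/η))
  simpa using this

lemma int_exp_val {η : ℝ} (hη : 0 < η) (t : ℝ) :
    ∫ τ in Ioi t, exp (-η * (τ - t)) = 1/η := by
  have h := integral_Ioi_of_hasDerivAt_of_tendsto' (fun x _ => hd_F hη t x)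
    (int_exp hη t) (by simpa using (tend_exp hη t).const_mul (-(1/η)))
  rw [h]; simp

lemma hd_G {η : ℝ} (hη : 0 < η) (t τ : ℝ) :
    HasDerivAt (fun τ : ℝ => -((τ - t)/η + 1/η^2) * exp (-η * (τ - t)))
      ((τ - t) * exp (-η * (τ - t))) τ := by
  have h1 : HasDerivAt (fun τ : ℝ => -((τ - t)/η + 1/η^2)) (-(1/η)) τ := by
    have heq : (fun τ : ℝ => -((τ - t)/η + 1/η^2)) = fun τ => -(1/η) * τ + (t/η - 1/η^2) := by
      funext τ; ring
    rw [heq]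
    have h0 := ((hasDerivAt_id τ).const_mul (-(1/η))).add_const (t/η - 1/η^2)
    refine h0.congr_deriv ?_
    ring
  have h := h1.mul (hd_exp (η := η) t τ)
  refine h.congr_deriv ?_
  field_simp
  ring

lemma int_lin {η : ℝ} (hη : 0 < η) (t : ℝ) :
    IntegrableOn (fun τ : ℝ => (τ - t) * exp (-η * (τ - t))) (Ioi t) := by
  apply integrableOn_Ioi_deriv_of_nonneg' (fun x _ => hd_G hη t x)
    (fun x hx => mul_nonneg (by simp [Set.mem_Ioi] at hx; linarith) (exp_pos _).le)
  have h1 := (tend_lin hη t).const_mul (-(1/η))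
  have h2 := (tend_exp hη t).const_mul (-(1/η^2))
  have := h1.add h2
  rw [mul_zero, mul_zero, add_zero] at this
  refine this.congr fun τ => ?_
  ring

lemma int_lin_val {η : ℝ} (hη : 0 < η) (t : ℝ) :
    ∫ τ in Ioi t, (τ - t) * exp (-η * (τ - t)) = 1/η^2 := by
  have htend : Tendsto (fun τ : ℝ => -((τ - t)/η + 1/η^2) * exp (-η * (τ - t))) atTop (nhds 0) := by
    have h1 := (tend_lin hη t).const_mul (-(1/η))
    have h2 := (tend_exp hη t).const_mul (-(1/η^2))
    have := h1.add h2
    rw [mul_zero, mul_zero, add_zero] at this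
    refine this.congr fun τ => ?_
    ring
  have h := integral_Ioi_of_hasDerivAt_of_tendsto' (fun x _ => hd_G hη t x)
    (int_lin hη t) htend
  rw [h]; simp

section main
variable {η γ : ℝ} {xz : ℝ → ℝ}

lemma lip (hγ : 0 ≤ γ) (hxz : Differentiable ℝ xz) (hxz' : ∀ t, |deriv xz t| ≤ γ)
    (s τ : ℝ) : |xz τ - xz s| ≤ γ * |τ - s| := by
  have := convex_univ.norm_image_sub_le_of_norm_deriv_le (f := xz) (C := γ)
    (fun x _ => hxz x) (fun x _ => hxz' x) (Set.mem_univ s) (Set.mem_univ τ)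
  simpa [Real.norm_eq_abs] using this

lemma int_f (hη : 0 < η) (hγ : 0 ≤ γ) (hxz : Differentiable ℝ xz)
    (hxz' : ∀ t, |deriv xz t| ≤ γ) (t : ℝ) :
    IntegrableOn (fun τ : ℝ => exp (-η * (τ - t)) * xz τ) (Set.Ioi t) := by
  have hg : IntegrableOn
      (fun τ : ℝ => |xz t| * exp (-η * (τ - t)) + γ * ((τ - t) * exp (-η * (τ - t))))
      (Set.Ioi t) := ((int_exp hη t).const_mul _).add ((int_lin hη t).const_mul _)
  apply Integrable.mono' hg
  · exact ((Real.continuous_exp.comp (by continuity)).mul hxz.continuous).aestronglyMeasurable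
  · filter_upwards [ae_restrict_mem measurableSet_Ioi] with τ hτ
    have hτ' : t ≤ τ := le_of_lt hτ
    have h1 : |xz τ| ≤ |xz t| + γ * (τ - t) := by
      have := lip hγ hxz hxz' t τ
      rw [show |τ - t| = τ - t from abs_of_nonneg (by linarith)] at this
      calc |xz τ| ≤ |xz t| + |xz τ - xz t| := by
            have := abs_add_le (xz t) (xz τ - xz t); simpa using this
        _ ≤ |xz t| + γ * (τ - t) := by
            have h2 := abs_sub_abs_le_abs_sub (xz τ) (xz t)
            have h3 := abs_sub (xz τ) (xz t)
            linarith [le_abs_self (xz τ - xz t), abs_nonneg (xz τ - xz t), this]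
    have hexp : (0:ℝ) < exp (-η * (τ - t)) := exp_pos _
    rw [Real.norm_eq_abs, abs_mul, abs_of_pos hexp]
    calc exp (-η * (τ - t)) * |xz τ| ≤ exp (-η * (τ - t)) * (|xz t| + γ * (τ - t)) := by
          apply mul_le_mul_of_nonneg_left h1 hexp.le
      _ = |xz t| * exp (-η * (τ - t)) + γ * ((τ - t) * exp (-η * (τ - t))) := by ring

end main

/-- If `x_u' = η(x_u − x_z)` for `t ≥ t₀`, `x_z` has derivative bounded by `γ`,
and the stability condition holds at `t₀`, then `|x_u(t) − x_z(t)| ≤ γ/η` for all `t ≥ t₀`. -/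
theorem stmt_2 (η γ t₀ : ℝ) (hη : 0 < η) (hγ : 0 ≤ γ)
    (xz xu : ℝ → ℝ)
    (hxz : Differentiable ℝ xz) (hxz' : ∀ t, |deriv xz t| ≤ γ)
    (hode : ∀ t, t₀ ≤ t → HasDerivAt xu (η * (xu t - xz t)) t)
    (hinit : xu t₀ = η * ∫ τ in Set.Ioi t₀, Real.exp (-η * (τ - t₀)) * xz τ) :
    ∀ t, t₀ ≤ t → |xu t - xz t| ≤ γ / η := by

  set f : ℝ → ℝ := fun τ => exp (-η * (τ - t₀)) * xz τ with hf_def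
  have hf_cont : Continuous f :=
    (Real.continuous_exp.comp (by continuity)).mul hxz.continuous
  have hf_int0 : IntegrableOn f (Set.Ioi t₀) := int_f hη hγ hxz hxz' t₀
  have hf_int : ∀ s, t₀ ≤ s → IntegrableOn f (Set.Ioi s) :=
    fun s hs => hf_int0.mono_set (Set.Ioi_subset_Ioi hs)
  set F : ℝ → ℝ := fun t => exp (-η * (t - t₀)) * xu t + η * ∫ τ in t₀..t, f τ with hF_def
  -- F has derivative 0 on Ici t₀
  have hF_deriv : ∀ t, t₀ ≤ t → HasDerivAt F 0 t := by
    intro t ht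
    have h1 := (hd_exp (η := η) t₀ t).mul (hode t ht)
    have h2 : HasDerivAt (fun u => ∫ τ in t₀..u, f τ) (f t) t :=
      intervalIntegral.integral_hasDerivAt_right (hf_cont.intervalIntegrable t₀ t)
        hf_cont.aestronglyMeasurable.stronglyMeasurableAtFilter hf_cont.continuousAt
    have h3 := h1.add (h2.const_mul η)
    refine h3.congr_deriv ?_
    simp only [hf_def]
    ring
  -- F is constant on Ici t₀
  have hF_const : ∀ t, t₀ ≤ t → F t = F t₀ := by
    intro t ht
    have := (convex_Ici t₀).norm_image_sub_le_of_norm_hasDerivWithin_le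
      (f' := fun _ => (0:ℝ)) (C := 0)
      (fun x hx => ((hF_deriv x hx).hasDerivWithinAt))
      (fun x _ => by simp) Set.self_mem_Ici ht
    simp only [norm_zero, zero_mul] at this
    have := norm_le_zero_iff.mp (le_trans this (by simp))
    exact sub_eq_zero.mp this
  intro t ht
  -- from constancy: exp(-η(t-t₀)) * xu t = η * ∫ (Ioi t) f
  have hsplit : ∫ τ in Set.Ioi t₀, f τ =
      (∫ τ in Set.Ioc t₀ t, f τ) + ∫ τ in Set.Ioi t, f τ := by
    rw [← setIntegral_union Set.Ioc_disjoint_Ioi_same measurableSet_Ioi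
      (hf_int0.mono_set Set.Ioc_subset_Ioi_self) (hf_int t ht),
      Set.Ioc_union_Ioi_eq_Ioi ht]
  have hkey : exp (-η * (t - t₀)) * xu t = η * ∫ τ in Set.Ioi t, f τ := by
    have h0 := hF_const t ht
    simp only [hF_def] at h0
    rw [intervalIntegral.integral_same, intervalIntegral.integral_of_le ht] at h0
    have : exp (-η * (t₀ - t₀)) * xu t₀ = η * ∫ τ in Set.Ioi t₀, f τ := by
      simp [hinit]
    rw [this, hsplit] at h0
    linarith [h0]
  have hxu : xu t = η * ∫ τ in Set.Ioi t, exp (-η * (τ - t)) * xz τ := by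
    have hepos : (0:ℝ) < exp (-η * (t - t₀)) := exp_pos _
    have : xu t = exp (η * (t - t₀)) * (η * ∫ τ in Set.Ioi t, f τ) := by
      rw [← hkey]
      rw [← mul_assoc, ← Real.exp_add]
      ring_nf
      rw [Real.exp_zero, one_mul]
    rw [this, ← mul_assoc, mul_comm (exp _) η, mul_assoc, ← integral_const_mul]
    congr 1
    apply setIntegral_congr_fun measurableSet_Ioi
    intro τ _
    simp only [hf_def]
    rw [← mul_assoc, ← Real.exp_add]
    ring_nf
  -- representation of the difference
  have hintegz : IntegrableOn (fun τ => exp (-η * (τ - t)) * xz τ) (Set.Ioi t) :=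
    int_f hη hγ hxz hxz' t
  have hintegc : IntegrableOn (fun τ => exp (-η * (τ - t)) * xz t) (Set.Ioi t) :=
    (int_exp hη t).mul_const _
  have hdiff : xu t - xz t =
      η * ∫ τ in Set.Ioi t, exp (-η * (τ - t)) * (xz τ - xz t) := by
    have hz : xz t = η * ∫ τ in Set.Ioi t, exp (-η * (τ - t)) * xz t := by
      rw [integral_mul_const, int_exp_val hη t]
      field_simp
    rw [hxu]
    nth_rewrite 1 [hz]
    rw [← mul_sub, ← integral_sub hintegz hintegc]
    congr 1
    apply integral_congr_ae
    filter_upwards with τ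
    ring
  -- final bound
  rw [hdiff, abs_mul, abs_of_pos hη]
  have hbound : |∫ τ in Set.Ioi t, exp (-η * (τ - t)) * (xz τ - xz t)| ≤ γ / η ^ 2 := by
    have hg : IntegrableOn (fun τ => γ * ((τ - t) * exp (-η * (τ - t)))) (Set.Ioi t) :=
      (int_lin hη t).const_mul _
    have h := norm_integral_le_of_norm_le (f := fun τ => exp (-η * (τ - t)) * (xz τ - xz t)) hg ?_
    · rw [Real.norm_eq_abs] at h
      refine le_trans h ?_
      rw [integral_const_mul, int_lin_val hη t]
      rw [mul_one_div]
    · filter_upwards [ae_restrict_mem measurableSet_Ioi] with τ hτ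
      have hτ' : t ≤ τ := le_of_lt hτ
      rw [Real.norm_eq_abs, abs_mul, abs_of_pos (exp_pos _)]
      have := lip hγ hxz hxz' t τ
      rw [show |τ - t| = τ - t from abs_of_nonneg (by linarith)] at this
      calc exp (-η * (τ - t)) * |xz τ - xz t| ≤ exp (-η * (τ - t)) * (γ * (τ - t)) :=
            mul_le_mul_of_nonneg_left this (exp_pos _).le
        _ = γ * ((τ - t) * exp (-η * (τ - t))) := by ring
  calc η * |∫ τ in Set.Ioi t, exp (-η * (τ - t)) * (xz τ - xz t)| ≤ η * (γ / η ^ 2) :=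
        mul_le_mul_of_nonneg_left hbound hη.le
    _ = γ / η := by field_simp
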